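/- The map S is injective on Ω_β, it is of class C² there, its Jacobian determinant at every u ∈ Ω_β equals det DS(u) = (−1)^(k−1)·(∂Φ₀/∂x₁)(Γu), which never vanishes, and hence S is a C² diffeomorphism from Ω_β onto its image S(Ω_β). (Lemma 'S-diff'.) -/

import Mathlib

open MeasureTheory

set_option maxHeartbeats 2000000 in
/-- **Lemma `S-diff`.** The map `S` is injective and C² on `Ω_β`, its Jacobian
determinant at every `u ∈ Ω_β` equals `(−1)^(k−1)·∂Φ₀/∂x₁(Γu)` and never vanishes,
and `S` is a C² diffeomorphism from `Ω_β` onto its image. -/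
theorem S_diff (k : ℕ) (hk : 2 ≤ k)
    (L β σ C₁ C₂ : ℝ)
    (hL : 0 < L) (hβ : 0 < β) (hσ : 1 < σ) (hC₁ : 1 < C₁) (hC₂ : 1 < C₂)
    (γ : ℝ) (hγ : γ = (C₁ * σ) ^ (-(1 : ℝ) / 2))
    (Φ₀ : EuclideanSpace ℝ (Fin k) → ℝ)
    (cube : Set (EuclideanSpace ℝ (Fin k)))
    (hcube : cube = {x | ∀ j : Fin k, -(L + β) < x j ∧ x j < L + β})
    (hΦ : ContDiffOn ℝ 2 Φ₀ cube)
    (hd1 : ∀ x ∈ cube,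
      C₁ ^ (k - 1) * C₂ * σ ^ k
        ≤ (fderiv ℝ Φ₀ x (EuclideanSpace.single (⟨0, by omega⟩ : Fin k) 1)) ^ 2)
    (hdj : ∀ x ∈ cube, ∀ j : Fin k, 1 ≤ (j : ℕ) →
      (fderiv ℝ Φ₀ x (EuclideanSpace.single j 1)) ^ 2 ≤ (C₁ - 1) * (C₂ - 1) * σ / (k - 1))
    (Γ : EuclideanSpace ℝ (Fin k) → EuclideanSpace ℝ (Fin k))
    (hΓ : ∀ x (j : Fin k), Γ x j = γ ^ (-((j : ℕ) : ℤ)) * x j)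
    (Ωβ : Set (EuclideanSpace ℝ (Fin k)))
    (hΩβ : Ωβ = {u | ∀ j : Fin k, |u j| < γ ^ (j : ℕ) * (L + β)})
    (S : EuclideanSpace ℝ (Fin k) → EuclideanSpace ℝ (Fin k))
    (hS : ∀ u (i : Fin k),
      (∀ h : (i : ℕ) + 1 < k, S u i = u ⟨(i : ℕ) + 1, h⟩ / γ) ∧
      ((i : ℕ) = k - 1 → S u i = γ ^ (k - 1) * Φ₀ (Γ u))) :
    Set.InjOn S Ωβ ∧
    ContDiffOn ℝ 2 S Ωβ ∧
    (∀ u ∈ Ωβ,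
      LinearMap.det
          (fderiv ℝ S u : EuclideanSpace ℝ (Fin k) →ₗ[ℝ] EuclideanSpace ℝ (Fin k))
        = (-1 : ℝ) ^ (k - 1)
            * fderiv ℝ Φ₀ (Γ u) (EuclideanSpace.single (⟨0, by omega⟩ : Fin k) 1) ∧
      LinearMap.det
          (fderiv ℝ S u : EuclideanSpace ℝ (Fin k) →ₗ[ℝ] EuclideanSpace ℝ (Fin k)) ≠ 0) ∧
    ∃ Sinv : EuclideanSpace ℝ (Fin k) → EuclideanSpace ℝ (Fin k),
      ContDiffOn ℝ 2 Sinv (S '' Ωβ) ∧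
      (∀ u ∈ Ωβ, Sinv (S u) = u) ∧ (∀ y ∈ S '' Ωβ, S (Sinv y) = y) := by
  obtain ⟨m, rfl⟩ : ∃ m, k = m + 2 := ⟨k - 2, by omega⟩

  have hγpos : 0 < γ := by rw [hγ]; exact Real.rpow_pos_of_pos (by positivity) _
  have hγne : γ ≠ 0 := ne_of_gt hγpos
  -- openness of the cube
  have hcubeopen : IsOpen cube := by
    rw [hcube]
    have h : {x : EuclideanSpace ℝ (Fin (m+2)) | ∀ j : Fin (m+2), -(L + β) < x j ∧ x j < L + β}
        = ⋂ j : Fin (m+2), (EuclideanSpace.proj j) ⁻¹' Set.Ioo (-(L + β)) (L + β) := by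
      ext x
      simp [Set.mem_iInter, Set.mem_Ioo]
    rw [h]
    exact isOpen_iInter_of_finite fun j =>
      isOpen_Ioo.preimage (EuclideanSpace.proj j).continuous
  -- convexity of the cube
  have hcubeconv : Convex ℝ cube := by
    rw [hcube]
    intro x hx y hy a b ha hb hab
    intro j
    have h1 := (convex_Ioo (-(L + β)) (L + β)) (Set.mem_Ioo.2 (hx j)) (Set.mem_Ioo.2 (hy j))
      ha hb hab
    have h2 : (a • x + b • y) j = a * x j + b * y j := by
      simp [PiLp.add_apply, PiLp.smul_apply, smul_eq_mul]
    rw [h2]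
    exact Set.mem_Ioo.1 h1
  -- openness of Ωβ
  have hΩopen : IsOpen Ωβ := by
    rw [hΩβ]
    have h : {u : EuclideanSpace ℝ (Fin (m+2)) | ∀ j : Fin (m+2), |u j| < γ ^ (j:ℕ) * (L + β)}
        = ⋂ j : Fin (m+2), (EuclideanSpace.proj j) ⁻¹'
            Set.Ioo (-(γ ^ (j:ℕ) * (L + β))) (γ ^ (j:ℕ) * (L + β)) := by
      ext u
      simp only [Set.mem_iInter, Set.mem_preimage, Set.mem_Ioo, Set.mem_setOf_eq,
        PiLp.proj_apply, abs_lt]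
    rw [h]
    exact isOpen_iInter_of_finite fun j =>
      isOpen_Ioo.preimage (EuclideanSpace.proj j).continuous
  -- Γ maps Ωβ into cube
  have hmaps : ∀ u ∈ Ωβ, Γ u ∈ cube := by
    intro u hu
    rw [hcube]
    intro j
    have h1 : |u j| < γ ^ (j:ℕ) * (L + β) := by rw [hΩβ] at hu; exact hu j
    have h2 : |Γ u j| < L + β := by
      rw [hΓ, abs_mul, abs_of_pos (zpow_pos hγpos _)]
      calc γ ^ (-((j:ℕ):ℤ)) * |u j| < γ ^ (-((j:ℕ):ℤ)) * (γ ^ (j:ℕ) * (L + β)) := by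
            exact mul_lt_mul_of_pos_left h1 (zpow_pos hγpos _)
        _ = L + β := by
            rw [← zpow_natCast γ (j:ℕ), ← mul_assoc, ← zpow_add₀ hγne]
            simp
    exact abs_lt.1 h2
  -- nonvanishing of the first partial derivative
  have hd0ne : ∀ x ∈ cube, fderiv ℝ Φ₀ x (EuclideanSpace.single (⟨0, by omega⟩ : Fin (m+2)) 1) ≠ 0 := by
    intro x hx h0
    have h := hd1 x hx
    rw [h0] at h
    have hpos : (0:ℝ) < C₁ ^ (m + 2 - 1) * C₂ * σ ^ (m + 2) := by positivity
    nlinarith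
  have hΦat : ∀ x ∈ cube, ContDiffAt ℝ 2 Φ₀ x := fun x hx =>
    hΦ.contDiffAt (hcubeopen.mem_nhds hx)
  have hΦdiff : ∀ x ∈ cube, DifferentiableAt ℝ Φ₀ x := fun x hx =>
    (hΦat x hx).differentiableAt (by norm_num)
  classical
  -- the explicit form of S
  let w : EuclideanSpace ℝ (Fin (m+2)) := EuclideanSpace.single (⟨m+1, by omega⟩ : Fin (m+2)) 1
  let eL := PiLp.continuousLinearEquiv 2 ℝ (fun _ : Fin (m+2) => ℝ)
  let A : EuclideanSpace ℝ (Fin (m+2)) →L[ℝ] EuclideanSpace ℝ (Fin (m+2)) :=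
    (eL.symm.toContinuousLinearMap).comp
      (ContinuousLinearMap.pi fun i : Fin (m+2) =>
        if h : (i:ℕ) + 1 < m + 2 then γ⁻¹ • EuclideanSpace.proj (⟨(i:ℕ)+1, h⟩ : Fin (m+2))
        else 0)
  let Γl : EuclideanSpace ℝ (Fin (m+2)) →L[ℝ] EuclideanSpace ℝ (Fin (m+2)) :=
    (eL.symm.toContinuousLinearMap).comp
      (ContinuousLinearMap.pi fun j : Fin (m+2) => γ ^ (-((j:ℕ):ℤ)) • EuclideanSpace.proj j)
  have hA : ∀ u (i : Fin (m+2)),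
      A u i = if h : (i:ℕ) + 1 < m + 2 then γ⁻¹ * u ⟨(i:ℕ)+1, h⟩ else 0 := by
    intro u i
    simp only [A, eL, ContinuousLinearMap.coe_comp', Function.comp_apply,
      ContinuousLinearEquiv.coe_coe, PiLp.continuousLinearEquiv_symm_apply,
      WithLp.equiv_symm_apply, PiLp.toLp_apply, ContinuousLinearMap.pi_apply]
    split
    · simp [PiLp.proj_apply, smul_eq_mul]
    · simp
  have hΓlapp : ∀ u (j : Fin (m+2)), Γl u j = γ ^ (-((j:ℕ):ℤ)) * u j := by
    intro u j
    simp only [Γl, eL, ContinuousLinearMap.coe_comp', Function.comp_apply,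
      ContinuousLinearEquiv.coe_coe, PiLp.continuousLinearEquiv_symm_apply,
      WithLp.equiv_symm_apply, PiLp.toLp_apply, ContinuousLinearMap.pi_apply]
    simp [PiLp.proj_apply, smul_eq_mul]
  have hΓeq : Γ = Γl := by
    funext u
    ext j
    rw [hΓ, hΓlapp]
  have hSF : S = fun u => A u + (γ ^ (m+1) * Φ₀ (Γl u)) • w := by
    funext u
    ext i
    have h2 : (A u + (γ ^ (m+1) * Φ₀ (Γl u)) • w) i
        = A u i + (γ ^ (m+1) * Φ₀ (Γl u)) * w i := by
      simp [PiLp.add_apply, PiLp.smul_apply, smul_eq_mul]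
    rw [h2, hA]
    by_cases h : (i:ℕ) + 1 < m + 2
    · rw [(hS u i).1 h, dif_pos h]
      have hwi : w i = 0 := by
        simp only [w, EuclideanSpace.single_apply]
        rw [if_neg]
        intro hcon
        apply absurd (congrArg Fin.val hcon)
        simp; omega
      rw [hwi, mul_zero, add_zero, div_eq_inv_mul]
    · have hival : (i:ℕ) = m + 1 := by have := i.isLt; omega
      rw [(hS u i).2 (by omega), dif_neg h]
      have hwi : w i = 1 := by
        simp only [w, EuclideanSpace.single_apply]
        rw [if_pos (Fin.ext (by simpa using hival))]
      rw [hwi, mul_one, zero_add, ← hΓeq]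
      norm_num
  -- the derivative of S
  let Dmap : EuclideanSpace ℝ (Fin (m+2)) →
      (EuclideanSpace ℝ (Fin (m+2)) →L[ℝ] EuclideanSpace ℝ (Fin (m+2))) :=
    fun u => A + ((γ ^ (m+1) • ((fderiv ℝ Φ₀ (Γl u)).comp Γl)).smulRight w)
  have hmaps' : Set.MapsTo Γl Ωβ cube := fun u hu => hΓeq ▸ hmaps u hu
  have hder : ∀ u ∈ Ωβ, HasFDerivAt S (Dmap u) u := by
    intro u hu
    have hcu : Γl u ∈ cube := hmaps' hu
    have h1 : HasFDerivAt (fun v => Φ₀ (Γl v)) ((fderiv ℝ Φ₀ (Γl u)).comp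
        (Γl : EuclideanSpace ℝ (Fin (m+2)) →L[ℝ] EuclideanSpace ℝ (Fin (m+2)))) u :=
      ((hΦdiff _ hcu).hasFDerivAt).comp u Γl.hasFDerivAt
    have h2 : HasFDerivAt (fun v => γ ^ (m+1) * Φ₀ (Γl v))
        (γ ^ (m+1) • ((fderiv ℝ Φ₀ (Γl u)).comp Γl)) u := h1.const_mul _
    have h3 := h2.smul_const w
    rw [hSF]
    exact A.hasFDerivAt.add h3
  have hfder : ∀ u ∈ Ωβ, fderiv ℝ S u = Dmap u := fun u hu => (hder u hu).fderiv
  -- S is C² on Ωβ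
  have hScd : ContDiffOn ℝ 2 S Ωβ := by
    rw [hSF]
    exact (A.contDiff.contDiffOn).add
      ((contDiffOn_const.mul (hΦ.comp Γl.contDiff.contDiffOn hmaps')).smul contDiffOn_const)
  -- determinant computation
  have hdet : ∀ u : EuclideanSpace ℝ (Fin (m+2)),
      LinearMap.det (↑(Dmap u) :
          EuclideanSpace ℝ (Fin (m+2)) →ₗ[ℝ] EuclideanSpace ℝ (Fin (m+2)))
        = (-1:ℝ)^(m+1)
          * fderiv ℝ Φ₀ (Γl u) (EuclideanSpace.single (⟨0, by omega⟩ : Fin (m+2)) 1) := by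
    intro u
    set d : Fin (m+2) → ℝ :=
      fun j => fderiv ℝ Φ₀ (Γl u) (EuclideanSpace.single j 1) with hd
    set b := PiLp.basisFun 2 ℝ (Fin (m+2)) with hb
    rw [← LinearMap.det_toMatrix b]
    set M := LinearMap.toMatrix b b (↑(Dmap u) :
      EuclideanSpace ℝ (Fin (m+2)) →ₗ[ℝ] EuclideanSpace ℝ (Fin (m+2))) with hM
    have hbj : ∀ j : Fin (m+2), b j = EuclideanSpace.single j 1 := by
      intro j
      rw [hb, PiLp.basisFun_apply]
    have hΓsing : ∀ j : Fin (m+2), Γl (EuclideanSpace.single j 1)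
        = γ ^ (-((j:ℕ):ℤ)) • EuclideanSpace.single j 1 := by
      intro j
      ext s
      rw [hΓlapp]
      simp only [EuclideanSpace.single_apply, PiLp.smul_apply, smul_eq_mul]
      by_cases hsj : s = j
      · subst hsj; simp
      · simp [hsj]
    have hMij : ∀ i j : Fin (m+2), M i j =
        (if h : (i:ℕ)+1 < m+2 then
            (if (⟨(i:ℕ)+1, h⟩ : Fin (m+2)) = j then γ⁻¹ else 0) else 0)
        + (if i = (⟨m+1, by omega⟩ : Fin (m+2)) then
            γ^(m+1) * (γ^(-((j:ℕ):ℤ)) * d j) else 0) := by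
      intro i j
      have h1 : M i j = (Dmap u) (EuclideanSpace.single j 1) i := by
        rw [hM, LinearMap.toMatrix_apply, hbj, PiLp.basisFun_repr,
          ContinuousLinearMap.coe_coe]
      rw [h1]
      have h2 : (Dmap u) (EuclideanSpace.single j 1) i
          = A (EuclideanSpace.single j 1) i
            + (γ^(m+1) * (fderiv ℝ Φ₀ (Γl u) (Γl (EuclideanSpace.single j 1)))) * w i := by
        simp only [Dmap, ContinuousLinearMap.add_apply, ContinuousLinearMap.smulRight_apply,
          ContinuousLinearMap.coe_smul', Pi.smul_apply, ContinuousLinearMap.coe_comp',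
          Function.comp_apply, PiLp.add_apply, PiLp.smul_apply, smul_eq_mul]
      rw [h2, hA, hΓsing, (fderiv ℝ Φ₀ (Γl u)).map_smul, smul_eq_mul]
      congr 1
      · by_cases h : (i:ℕ)+1 < m+2
        · rw [dif_pos h, dif_pos h, EuclideanSpace.single_apply]
          by_cases hij : (⟨(i:ℕ)+1, h⟩ : Fin (m+2)) = j
          · rw [if_pos hij, if_pos hij, mul_one]
          · rw [if_neg hij, if_neg hij, mul_zero]
        · rw [dif_neg h, dif_neg h]
      · have hwi : w i = if i = (⟨m+1, by omega⟩ : Fin (m+2)) then 1 else 0 := by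
          simp only [w, EuclideanSpace.single_apply]
        rw [hwi]
        by_cases hil : i = (⟨m+1, by omega⟩ : Fin (m+2))
        · rw [if_pos hil, if_pos hil, mul_one]
        · rw [if_neg hil, if_neg hil, mul_zero]
    -- expand along the first column
    rw [Matrix.det_succ_column_zero]
    rw [Finset.sum_eq_single (Fin.last (m+1))]
    · have hz : (0 : Fin (m+2)) = (⟨0, by omega⟩ : Fin (m+2)) := rfl
      have hlast0 : M (Fin.last (m+1)) 0 = γ^(m+1) * d ⟨0, by omega⟩ := by
        rw [hMij]
        rw [dif_neg (by simp [Fin.val_last])]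
        rw [if_pos (by ext; simp [Fin.val_last])]
        rw [← hz]
        norm_num
      have hminor : M.submatrix (Fin.last (m+1)).succAbove Fin.succ
          = Matrix.diagonal (fun _ : Fin (m+1) => γ⁻¹) := by
        ext i j
        rw [Matrix.submatrix_apply, Fin.succAbove_last, hMij]
        have hic : ((Fin.castSucc i : Fin (m+2)) : ℕ) = (i:ℕ) := rfl
        have hjs : ((Fin.succ j : Fin (m+2)) : ℕ) = (j:ℕ) + 1 := rfl
        have h : ((Fin.castSucc i : Fin (m+2)):ℕ)+1 < m+2 := by
          rw [hic]; have := i.isLt; omega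
        rw [dif_pos h]
        have hne2 : ¬ (Fin.castSucc i = (⟨m+1, by omega⟩ : Fin (m+2))) := by
          intro hcon
          have h3 := congrArg Fin.val hcon
          rw [hic] at h3
          have := i.isLt
          simp only at h3
          omega
        rw [if_neg hne2, add_zero]
        by_cases hij : i = j
        · subst hij
          rw [if_pos (show (⟨((Fin.castSucc i : Fin (m+2)):ℕ) + 1, h⟩ : Fin (m+2)) = Fin.succ i
            from Fin.ext rfl), Matrix.diagonal_apply_eq]
        · rw [if_neg (by
            intro hcon
            have h3 : (i:ℕ) + 1 = (j:ℕ) + 1 := congrArg Fin.val hcon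
            exact hij (Fin.ext (by omega))), Matrix.diagonal_apply_ne _ hij]
      rw [hlast0, hminor, Matrix.det_diagonal]
      simp only [Finset.prod_const, Finset.card_univ, Fintype.card_fin, Fin.val_last]
      have hγpow : γ^(m+1) * (γ⁻¹)^(m+1) = 1 := by
        rw [← mul_pow, mul_inv_cancel₀ hγne, one_pow]
      have hX : d ⟨0, by omega⟩
          = fderiv ℝ Φ₀ (Γl u) (EuclideanSpace.single (⟨0, by omega⟩ : Fin (m+2)) 1) := rfl
      rw [hX]
      linear_combination ((-1:ℝ)^(m+1)
        * fderiv ℝ Φ₀ (Γl u) (EuclideanSpace.single (⟨0, by omega⟩ : Fin (m+2)) 1)) * hγpow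
    · intro i _ hine
      have hMi0 : M i 0 = 0 := by
        rw [hMij]
        have hlt : (i:ℕ)+1 < m+2 := by
          have := i.isLt
          rcases Nat.lt_or_ge ((i:ℕ)+1) (m+2) with h|h
          · exact h
          · exfalso; exact hine (Fin.ext (by simp only [Fin.val_last]; omega))
        rw [dif_pos hlt]
        rw [if_neg (by
          intro hcon
          have := congrArg Fin.val hcon
          simp at this)]
        rw [if_neg (by
          intro hcon
          have h5 : (i:ℕ) = m+1 := congrArg Fin.val hcon
          exact hine (Fin.ext (by simp only [Fin.val_last]; omega)))]
        norm_num
      rw [hMi0]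
      ring
    · intro h
      exact absurd (Finset.mem_univ _) h
  -- injectivity
  have hinj : Set.InjOn S Ωβ := by
    intro u hu v hv huv
    have hcoord : ∀ i : Fin (m+2), 1 ≤ (i:ℕ) → u i = v i := by
      intro i hi
      have hlt : (((⟨(i:ℕ)-1, by omega⟩ : Fin (m+2))) : ℕ) + 1 < m+2 := by
        have := i.isLt
        simp only
        omega
      have h1 := (hS u ⟨(i:ℕ)-1, by omega⟩).1 hlt
      have h2 := (hS v ⟨(i:ℕ)-1, by omega⟩).1 hlt
      have h3 : S u ⟨(i:ℕ)-1, by omega⟩ = S v ⟨(i:ℕ)-1, by omega⟩ := by rw [huv]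
      rw [h1, h2, div_eq_div_iff hγne hγne] at h3
      have h4 := mul_right_cancel₀ hγne h3
      have h5 : (⟨(((⟨(i:ℕ)-1, by omega⟩ : Fin (m+2))) : ℕ) + 1, hlt⟩ : Fin (m+2)) = i :=
        Fin.ext (show (i:ℕ) - 1 + 1 = (i:ℕ) by omega)
      rw [h5] at h4
      exact h4
    -- equality of the last components gives Φ₀ (Γ u) = Φ₀ (Γ v)
    have h0 : Φ₀ (Γ u) = Φ₀ (Γ v) := by
      have h1 := (hS u (⟨m+1, by omega⟩ : Fin (m+2))).2 rfl
      have h2 := (hS v (⟨m+1, by omega⟩ : Fin (m+2))).2 rfl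
      have hlast : S u (⟨m+1, by omega⟩ : Fin (m+2)) = S v (⟨m+1, by omega⟩ : Fin (m+2)) := by
        rw [huv]
      rw [h1, h2] at hlast
      exact mul_left_cancel₀ (pow_ne_zero _ hγne) hlast
    -- mean value argument for the first coordinate
    have hu0 : u ⟨0, by omega⟩ = v ⟨0, by omega⟩ := by
      set e0 : EuclideanSpace ℝ (Fin (m+2)) :=
        EuclideanSpace.single (⟨0, by omega⟩ : Fin (m+2)) 1 with he0
      set δ : ℝ := v ⟨0, by omega⟩ - u ⟨0, by omega⟩ with hδ
      have hxc : Γ u ∈ cube := hmaps u hu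
      have hyc : Γ v ∈ cube := hmaps v hv
      have hwv : Γ v = Γ u + δ • e0 := by
        ext j
        simp only [PiLp.add_apply, PiLp.smul_apply, he0, EuclideanSpace.single_apply,
          smul_eq_mul]
        by_cases hj : j = (⟨0, by omega⟩ : Fin (m+2))
        · subst hj
          rw [hΓ, hΓ, if_pos rfl]
          have hv0 : ((⟨0, by omega⟩ : Fin (m+2)) : ℕ) = 0 := rfl
          rw [hv0]
          simp only [Nat.cast_zero, neg_zero, zpow_zero, one_mul, mul_one, hδ]
          ring
        · rw [hΓ, hΓ, if_neg hj, mul_zero, add_zero, hcoord j (by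
            have : (j:ℕ) ≠ 0 := fun h => hj (Fin.ext h)
            omega)]
      have hψ : ∀ t : ℝ, Γ u + t • (δ • e0) = (1-t) • Γ u + t • Γ v := by
        intro t
        rw [hwv]
        module
      have hseg : ∀ t ∈ Set.Icc (0:ℝ) 1, Γ u + t • (δ • e0) ∈ cube := by
        intro t ht
        rw [hψ]
        exact hcubeconv hxc hyc (by linarith [ht.2]) ht.1 (by ring)
      have hφ : ∀ t ∈ Set.Ioo (0:ℝ) 1, HasDerivAt (fun s : ℝ => Φ₀ (Γ u + s • (δ • e0)))
          (fderiv ℝ Φ₀ (Γ u + t • (δ • e0)) (δ • e0)) t := by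
        intro t ht
        have hmem := hseg t (Set.mem_Icc_of_Ioo ht)
        have hline : HasDerivAt (fun s : ℝ => Γ u + s • (δ • e0)) (δ • e0) t := by
          have h1 : HasDerivAt (fun s : ℝ => s • (δ • e0)) ((1:ℝ) • (δ • e0)) t :=
            (hasDerivAt_id t).smul_const (δ • e0)
          rw [one_smul] at h1
          exact h1.const_add (Γ u)
        exact ((hΦdiff _ hmem).hasFDerivAt).comp_hasDerivAt t hline
      have hcont : ContinuousOn (fun s : ℝ => Φ₀ (Γ u + s • (δ • e0))) (Set.Icc 0 1) := by
        apply hΦ.continuousOn.comp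
          (Continuous.continuousOn (continuous_const.add (continuous_id.smul continuous_const)))
        exact fun t ht => hseg t ht
      obtain ⟨c, hc, hceq⟩ := exists_hasDerivAt_eq_slope
        (fun s : ℝ => Φ₀ (Γ u + s • (δ • e0)))
        (fun t => fderiv ℝ Φ₀ (Γ u + t • (δ • e0)) (δ • e0)) one_pos hcont hφ
      have hend : Φ₀ (Γ u + (1:ℝ) • (δ • e0)) = Φ₀ (Γ u + (0:ℝ) • (δ • e0)) := by
        rw [one_smul, zero_smul, add_zero, ← hwv, h0]
      have hder0 : fderiv ℝ Φ₀ (Γ u + c • (δ • e0)) (δ • e0) = 0 := by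
        rw [hceq, hend]
        simp
      have hp : Γ u + c • (δ • e0) ∈ cube := hseg c (Set.mem_Icc_of_Ioo hc)
      have hlin : fderiv ℝ Φ₀ (Γ u + c • (δ • e0)) (δ • e0)
          = δ * fderiv ℝ Φ₀ (Γ u + c • (δ • e0)) e0 := by
        rw [(fderiv ℝ Φ₀ (Γ u + c • (δ • e0))).map_smul, smul_eq_mul]
      rw [hlin] at hder0
      have hne := hd0ne _ hp
      rcases mul_eq_zero.1 hder0 with h|h
      · have : v ⟨0, by omega⟩ - u ⟨0, by omega⟩ = 0 := by rw [← hδ]; exact h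
        linarith [this]
      · exact absurd h hne
    ext j
    by_cases hj : (j:ℕ) = 0
    · have hjj : j = (⟨0, by omega⟩ : Fin (m+2)) := Fin.ext hj
      rw [hjj]
      exact hu0
    · exact hcoord j (by omega)
  -- Jacobian statement
  have hjac : ∀ u ∈ Ωβ,
      LinearMap.det (↑(fderiv ℝ S u) :
          EuclideanSpace ℝ (Fin (m+2)) →ₗ[ℝ] EuclideanSpace ℝ (Fin (m+2)))
        = (-1:ℝ)^(m+2-1)
          * fderiv ℝ Φ₀ (Γ u) (EuclideanSpace.single (⟨0, by omega⟩ : Fin (m+2)) 1) ∧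
      LinearMap.det (↑(fderiv ℝ S u) :
          EuclideanSpace ℝ (Fin (m+2)) →ₗ[ℝ] EuclideanSpace ℝ (Fin (m+2))) ≠ 0 := by
    intro u hu
    have hcu : Γl u ∈ cube := hmaps' hu
    rw [hfder u hu]
    constructor
    · rw [hdet u, hΓeq]
      norm_num
    · rw [hdet u]
      intro hcon
      rcases mul_eq_zero.1 hcon with h|h
      · exact absurd h (pow_ne_zero _ (by norm_num))
      · exact hd0ne _ hcu h
  refine ⟨hinj, hScd, hjac, Function.invFunOn S Ωβ, ?_, ?_, ?_⟩
  · -- the inverse is C² on the image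
    intro y hy
    obtain ⟨a, ha, rfl⟩ := hy
    have hSa : ContDiffAt ℝ 2 S a := hScd.contDiffAt (hΩopen.mem_nhds ha)
    have hdne := (hjac a ha).2
    have hdd : LinearMap.det (↑(Dmap a) :
        EuclideanSpace ℝ (Fin (m+2)) →ₗ[ℝ] EuclideanSpace ℝ (Fin (m+2))) ≠ 0 := by
      rw [← hfder a ha]
      exact hdne
    let e : EuclideanSpace ℝ (Fin (m+2)) ≃ₗ[ℝ] EuclideanSpace ℝ (Fin (m+2)) :=
      LinearMap.equivOfDetNeZero _ hdd
    let eC : EuclideanSpace ℝ (Fin (m+2)) ≃L[ℝ] EuclideanSpace ℝ (Fin (m+2)) :=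
      e.toContinuousLinearEquiv
    have heC : ((eC : EuclideanSpace ℝ (Fin (m+2)) →L[ℝ] EuclideanSpace ℝ (Fin (m+2))))
        = Dmap a := ContinuousLinearMap.ext fun x => rfl
    have hfa : HasFDerivAt S ((eC : EuclideanSpace ℝ (Fin (m+2)) →L[ℝ]
        EuclideanSpace ℝ (Fin (m+2)))) a := by
      rw [heC]
      exact hder a ha
    have hn : (2 : WithTop ℕ∞) ≠ 0 := by simp
    have hstrict : HasStrictFDerivAt S ((eC : EuclideanSpace ℝ (Fin (m+2)) →L[ℝ]
        EuclideanSpace ℝ (Fin (m+2)))) a := hSa.hasStrictFDerivAt' hfa hn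
    have hg : ContDiffAt ℝ 2 (hstrict.localInverse S eC a) (S a) :=
      hSa.to_localInverse hfa hn
    have hga : hstrict.localInverse S eC a (S a) = a := hstrict.localInverse_apply_image
    have hgc : ContinuousAt (hstrict.localInverse S eC a) (S a) :=
      hstrict.localInverse_continuousAt
    have himg : S '' Ωβ ∈ nhds (S a) := by
      rw [← hstrict.map_nhds_eq_of_equiv]
      exact Filter.image_mem_map (hΩopen.mem_nhds ha)
    have hmem : ∀ᶠ y' in nhds (S a), hstrict.localInverse S eC a y' ∈ Ωβ :=
      hgc.eventually_mem (hΩopen.mem_nhds (by rw [hga]; exact ha))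
    have hright : ∀ᶠ y' in nhds (S a), S (hstrict.localInverse S eC a y') = y' :=
      hstrict.eventually_right_inverse
    have heq : Function.invFunOn S Ωβ =ᶠ[nhds (S a)] hstrict.localInverse S eC a := by
      filter_upwards [himg, hmem, hright] with y' hy1 hy2 hy3
      have h4 : S (Function.invFunOn S Ωβ y') = y' := by
        obtain ⟨b, hb, rfl⟩ := hy1
        exact Function.invFunOn_eq ⟨b, hb, rfl⟩
      have h5 : Function.invFunOn S Ωβ y' ∈ Ωβ := by
        obtain ⟨b, hb, rfl⟩ := hy1
        exact Function.invFunOn_mem ⟨b, hb, rfl⟩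
      exact hinj h5 hy2 (h4.trans hy3.symm)
    exact (hg.congr_of_eventuallyEq heq).contDiffWithinAt
  · intro u hu
    exact hinj.leftInvOn_invFunOn hu
  · intro y hy
    obtain ⟨a, ha, rfl⟩ := hy
    exact Function.invFunOn_eq ⟨a, ha, rfl⟩
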